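/- arXiv:1912.00593 — 6 statements merged into one kernel-verified Lean document; each statement's English description precedes it below -/
import Mathlib

section
/- Let v, b ∈ ℂ^n and u ∈ ℕ^n, and set e = |nsupp(v−u) \ nsupp(v)|. Then in the polynomial [v+sb]_u ∈ ℂ[s], the coefficient of s^k is zero for every k < e, and the coefficient of s^e equals (∏_{i ∈ nsupp(v−u)\nsupp(v)} b_i) · [v]^_u; that is, [v+sb]_u = (∏_{i ∈ nsupp(v−u)\nsupp(v)} b_i) · [v]^_u · s^e + o(s^e). (Lemma 5.1.) -/
open scoped Classical

/-- The negative support of `v`: indices where `v i` is a negative integer. -/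
noncomputable def nsupp {n : ℕ} (v : Fin n → ℂ) : Finset (Fin n) :=
  Finset.univ.filter (fun i => ∃ m : ℤ, m < 0 ∧ v i = (m : ℂ))

/-- The falling factorial `[v]_u = ∏_i ∏_{k=0}^{u_i - 1} (v_i - k)`. -/
noncomputable def ffall {n : ℕ} (v : Fin n → ℂ) (u : Fin n → ℕ) : ℂ :=
  ∏ i, ∏ k ∈ Finset.range (u i), (v i - (k : ℂ))

/-- The reduced falling factorial: the product of the nonzero factors of `[v]_u`. -/
noncomputable def redffall {n : ℕ} (v : Fin n → ℂ) (u : Fin n → ℕ) : ℂ :=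
  ∏ i, ∏ k ∈ (Finset.range (u i)).filter (fun k : ℕ => v i - (k : ℂ) ≠ 0), (v i - (k : ℂ))

/-- The polynomial `[v + s b]_u = ∏_i ∏_{k=0}^{u_i - 1} (v_i - k + s b_i)` in `ℂ[s]`. -/
noncomputable def pertFF {n : ℕ} (v b : Fin n → ℂ) (u : Fin n → ℕ) : Polynomial ℂ :=
  ∏ i, ∏ k ∈ Finset.range (u i),
    (Polynomial.C (v i - (k : ℂ)) + Polynomial.C (b i) * Polynomial.X)

/-- Lemma 5.1: the coefficient of `s^k` in `[v+sb]_u` vanishes for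
`k < e = |nsupp(v-u) \ nsupp(v)|`, and the coefficient of `s^e` equals
`(∏_{i ∈ nsupp(v-u)\nsupp(v)} b_i) · [v]^_u`. -/
theorem pertFF_lowest_coeff {n : ℕ} (hn : 0 < n) (v b : Fin n → ℂ) (u : Fin n → ℕ)
    (e : ℕ) (he : e = ((nsupp (fun i => v i - (u i : ℂ))) \ nsupp v).card) :
    (∀ k < e, (pertFF v b u).coeff k = 0) ∧
    (pertFF v b u).coeff e =
      (∏ i ∈ (nsupp (fun i => v i - (u i : ℂ))) \ nsupp v, b i) * redffall v u := by
  classical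
  set D : Finset (Fin n) := (nsupp (fun i => v i - (u i : ℂ))) \ nsupp v with hDdef
  have hmem : ∀ i, i ∈ D ↔ ∃ k ∈ Finset.range (u i), v i = (k : ℂ) := by
    intro i
    simp only [hDdef, Finset.mem_sdiff, nsupp, Finset.mem_filter, Finset.mem_univ, true_and]
    constructor
    · rintro ⟨⟨m, hm, hvm⟩, hnot⟩
      have hvi : v i = ((m + (u i : ℤ) : ℤ) : ℂ) := by push_cast; linear_combination hvm
      have hnonneg : 0 ≤ m + (u i : ℤ) := by
        by_contra h
        exact hnot ⟨m + (u i : ℤ), by omega, hvi⟩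
      refine ⟨(m + (u i : ℤ)).toNat, ?_, ?_⟩
      · simp only [Finset.mem_range]; omega
      · rw [hvi]; norm_cast; omega
    · rintro ⟨k, hk, hvk⟩
      simp only [Finset.mem_range] at hk
      constructor
      · exact ⟨(k : ℤ) - (u i : ℤ), by omega, by push_cast; linear_combination hvk⟩
      · rintro ⟨m, hm, hvm⟩
        rw [hvk] at hvm
        have : (k : ℤ) = m := by exact_mod_cast hvm
        omega
  have hz : ∀ i, ((Finset.range (u i)).filter (fun k : ℕ => v i - (k : ℂ) = 0)).card =
      if i ∈ D then 1 else 0 := by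
    intro i
    by_cases hi : i ∈ D
    · obtain ⟨k, hk, hvk⟩ := (hmem i).1 hi
      rw [if_pos hi]
      have : ((Finset.range (u i)).filter (fun k : ℕ => v i - (k : ℂ) = 0)) = {k} := by
        ext k'
        simp only [Finset.mem_filter, Finset.mem_range, Finset.mem_singleton, sub_eq_zero]
        constructor
        · rintro ⟨_, hvk'⟩
          have : ((k' : ℂ)) = (k : ℂ) := by rw [← hvk', ← hvk]
          exact_mod_cast this
        · rintro rfl
          exact ⟨Finset.mem_range.mp hk, hvk⟩
      rw [this, Finset.card_singleton]
    · rw [if_neg hi, Finset.card_eq_zero, Finset.filter_eq_empty_iff]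
      intro k hk hvk
      exact hi ((hmem i).2 ⟨k, hk, by rwa [← sub_eq_zero]⟩)
  set Q : Polynomial ℂ := ∏ i, ∏ k ∈ (Finset.range (u i)).filter
      (fun k : ℕ => v i - (k : ℂ) ≠ 0),
      (Polynomial.C (v i - (k : ℂ)) + Polynomial.C (b i) * Polynomial.X) with hQdef
  have hsplit : pertFF v b u =
      (Polynomial.C (∏ i ∈ D, b i) * Q) * Polynomial.X ^ e := by
    rw [pertFF]
    have step1 : ∀ i, (∏ k ∈ Finset.range (u i),
        (Polynomial.C (v i - (k : ℂ)) + Polynomial.C (b i) * Polynomial.X)) =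
        ((if i ∈ D then Polynomial.C (b i) * Polynomial.X else 1) *
          ∏ k ∈ (Finset.range (u i)).filter (fun k : ℕ => v i - (k : ℂ) ≠ 0),
            (Polynomial.C (v i - (k : ℂ)) + Polynomial.C (b i) * Polynomial.X)) := by
      intro i
      rw [← Finset.prod_filter_mul_prod_filter_not (Finset.range (u i))
        (fun k : ℕ => v i - (k : ℂ) = 0)]
      congr 1
      have : ∀ k ∈ (Finset.range (u i)).filter (fun k : ℕ => v i - (k : ℂ) = 0),
          (Polynomial.C (v i - (k : ℂ)) + Polynomial.C (b i) * Polynomial.X) =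
          Polynomial.C (b i) * Polynomial.X := by
        intro k hk
        rw [(Finset.mem_filter.mp hk).2, map_zero, zero_add]
      rw [Finset.prod_congr rfl this, Finset.prod_const, hz i]
      by_cases hi : i ∈ D <;> simp [hi]
    rw [Finset.prod_congr rfl (fun i _ => step1 i), Finset.prod_mul_distrib]
    have h2 : (∏ i, (if i ∈ D then Polynomial.C (b i) * Polynomial.X else 1)) =
        Polynomial.C (∏ i ∈ D, b i) * Polynomial.X ^ e := by
      rw [Finset.prod_ite_mem, Finset.univ_inter, Finset.prod_mul_distrib,
        Finset.prod_const, map_prod, he]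
    rw [h2]
    ring
  have hQ0 : Q.coeff 0 = redffall v u := by
    rw [Polynomial.coeff_zero_eq_eval_zero, hQdef]
    simp [Polynomial.eval_prod, redffall]
  constructor
  · intro k hk
    rw [hsplit, Polynomial.coeff_mul_X_pow', if_neg (by omega)]
  · rw [hsplit, Polynomial.coeff_mul_X_pow', if_pos le_rfl, Nat.sub_self,
      Polynomial.mul_coeff_zero, Polynomial.coeff_C_zero, hQ0]
end

section
/- For every v ∈ ℂ^n and u ∈ ℤ^n, one has the equality of sets nsupp(v − u₋) \ nsupp(v) = nsupp(v + u) \ nsupp(v). (This set identity is the key step in the proof of Corollary 5.2.) -/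
open scoped Classical

/-- `nsupp(v − u₋) \ nsupp(v) = nsupp(v + u) \ nsupp(v)`
(key step in the proof of Corollary 5.2). -/
theorem nsupp_sub_negPart_sdiff_eq {n : ℕ} (hn : 0 < n) (v : Fin n → ℂ) (u : Fin n → ℤ) :
    nsupp (fun i => v i - (((-(u i)).toNat : ℕ) : ℂ)) \ nsupp v
      = nsupp (fun i => v i + ((u i : ℤ) : ℂ)) \ nsupp v := by
  ext i
  simp only [Finset.mem_sdiff, nsupp, Finset.mem_filter, Finset.mem_univ, true_and]
  by_cases h : u i < 0
  · have hcast : ((((-(u i)).toNat : ℕ) : ℂ)) = -((u i : ℤ) : ℂ) := by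
      have : (((-(u i)).toNat : ℤ)) = -(u i) := Int.toNat_of_nonneg (by omega)
      exact_mod_cast congrArg (fun z : ℤ => (z : ℂ)) this
    rw [hcast]; ring_nf
  · push_neg at h
    have h0 : (-(u i)).toNat = 0 := by omega
    rw [h0]
    constructor
    · rintro ⟨⟨m, hm, hv⟩, hns⟩
      exact absurd ⟨m, hm, by simpa using hv⟩ hns
    · rintro ⟨⟨m, hm, hv⟩, hns⟩
      refine absurd ⟨m - u i, by omega, ?_⟩ hns
      push_cast
      linear_combination hv
end

section
/- Let v ∈ ℂ^n, u ∈ ℤ^n, and b ∈ ℂ^n with b_j ≠ 0 for every j. Then the polynomial [v+sb]_{u₋} ∈ ℂ[s] is nonzero and ord_s([v+sb]_{u₋}) = |nsupp(v+u) \ nsupp(v)|. (Corollary 5.2 (1).) -/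
open scoped Classical

lemma ntd_prod {ι : Type*} (s : Finset ι) (f : ι → Polynomial ℂ)
    (h : ∀ i ∈ s, f i ≠ 0) :
    (∏ i ∈ s, f i).natTrailingDegree = ∑ i ∈ s, (f i).natTrailingDegree := by
  classical
  induction s using Finset.induction with
  | empty => simp
  | @insert a s hx ih =>
    rw [Finset.prod_insert hx, Finset.sum_insert hx,
      Polynomial.natTrailingDegree_mul (h a (Finset.mem_insert_self a s))
        (Finset.prod_ne_zero_iff.2 fun i hi => h i (Finset.mem_insert_of_mem hi)),
      ih fun i hi => h i (Finset.mem_insert_of_mem hi)]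

lemma factor_ne_zero (c b : ℂ) (hb : b ≠ 0) :
    Polynomial.C c + Polynomial.C b * Polynomial.X ≠ 0 := by
  intro h
  have := congrArg (Polynomial.coeff · 1) h
  simp at this
  exact hb this

lemma ntd_factor (c b : ℂ) (hb : b ≠ 0) :
    (Polynomial.C c + Polynomial.C b * Polynomial.X).natTrailingDegree =
      if c = 0 then 1 else 0 := by
  split
  · rename_i h
    subst h
    rw [map_zero, zero_add, Polynomial.C_mul_X_eq_monomial,
      Polynomial.natTrailingDegree_monomial hb]
  · rename_i h
    apply Polynomial.natTrailingDegree_eq_zero_of_constantCoeff_ne_zero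
    simpa [Polynomial.constantCoeff_apply] using h

lemma key_count {n : ℕ} (v : Fin n → ℂ) (u : Fin n → ℤ) (i : Fin n) :
    ((Finset.range ((-(u i)).toNat)).filter (fun k : ℕ => v i - (k : ℂ) = 0)).card =
      if i ∈ (nsupp (fun i => v i + ((u i : ℤ) : ℂ))) \ nsupp v then 1 else 0 := by
  classical
  split
  · rename_i hi
    rw [Finset.mem_sdiff, nsupp, nsupp, Finset.mem_filter, Finset.mem_filter] at hi
    obtain ⟨⟨-, m, hm, hvm⟩, hnot⟩ := hi
    set c : ℤ := m - u i with hc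
    have hvic : v i = (c : ℂ) := by
      push_cast [hc]
      linear_combination hvm
    have hc0 : 0 ≤ c := by
      by_contra hcn
      exact hnot ⟨Finset.mem_univ i, c, lt_of_not_ge hcn, hvic⟩
    have hlt : c < -(u i) := by omega
    rw [Finset.card_eq_one]
    refine ⟨c.toNat, Finset.eq_singleton_iff_unique_mem.2 ⟨?_, ?_⟩⟩
    · rw [Finset.mem_filter, Finset.mem_range]
      constructor
      · omega
      · rw [hvic, sub_eq_zero]
        norm_cast
        omega
    · intro k hk
      rw [Finset.mem_filter] at hk
      have := hk.2
      rw [hvic, sub_eq_zero] at this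
      have : c = (k : ℤ) := by exact_mod_cast this
      omega
  · rename_i hi
    rw [Finset.card_eq_zero, Finset.filter_eq_empty_iff]
    intro k hk
    rw [Finset.mem_range] at hk
    intro hvk
    rw [sub_eq_zero] at hvk
    apply hi
    rw [Finset.mem_sdiff, nsupp, nsupp, Finset.mem_filter, Finset.mem_filter]
    refine ⟨⟨Finset.mem_univ i, (k : ℤ) + u i, by omega, ?_⟩, ?_⟩
    · push_cast
      rw [hvk]
    · rintro ⟨-, m, hm, hvm⟩
      rw [hvk] at hvm
      have : (k : ℤ) = m := by exact_mod_cast hvm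
      omega

/-- Corollary 5.2 (1): if `b_j ≠ 0` for all `j`, then `[v+sb]_{u₋}` is a
nonzero polynomial with `ord_s([v+sb]_{u₋}) = |nsupp(v+u) \ nsupp(v)|`. -/
theorem ord_pertFF_negPart {n : ℕ} (hn : 0 < n) (v b : Fin n → ℂ) (u : Fin n → ℤ)
    (hb : ∀ j, b j ≠ 0) :
    pertFF v b (fun i => (-(u i)).toNat) ≠ 0 ∧
    (pertFF v b (fun i => (-(u i)).toNat)).natTrailingDegree =
      ((nsupp (fun i => v i + ((u i : ℤ) : ℂ))) \ nsupp v).card := by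
  have hne : ∀ (i : Fin n), ∀ k ∈ Finset.range ((-(u i)).toNat),
      (Polynomial.C (v i - (k : ℂ)) + Polynomial.C (b i) * Polynomial.X) ≠ 0 :=
    fun i k _ => factor_ne_zero _ _ (hb i)
  have hinner : ∀ i : Fin n, (∏ k ∈ Finset.range ((-(u i)).toNat),
      (Polynomial.C (v i - (k : ℂ)) + Polynomial.C (b i) * Polynomial.X)) ≠ 0 :=
    fun i => Finset.prod_ne_zero_iff.2 (hne i)
  constructor
  · exact Finset.prod_ne_zero_iff.2 fun i _ => hinner i
  · rw [pertFF, ntd_prod _ _ fun i _ => hinner i]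
    have : ∀ i : Fin n, (∏ k ∈ Finset.range ((-(u i)).toNat),
        (Polynomial.C (v i - (k : ℂ)) + Polynomial.C (b i) * Polynomial.X)).natTrailingDegree
        = if i ∈ (nsupp (fun i => v i + ((u i : ℤ) : ℂ))) \ nsupp v then 1 else 0 := by
      intro i
      rw [ntd_prod _ _ (hne i), ← key_count v u i, Finset.card_filter]
      apply Finset.sum_congr rfl
      intro k _
      exact ntd_factor _ _ (hb i)
    rw [Finset.sum_congr rfl fun i _ => this i]
    simp only [Finset.sum_ite_mem, Finset.univ_inter, Finset.sum_const, smul_eq_mul, mul_one]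
end

section
/- Let v ∈ ℂ^n, u ∈ ℤ^n, and b ∈ ℂ^n with b_j ≠ 0 for every j, and set I₀ = nsupp(v) and I = nsupp(v+u). Then both polynomials [v+sb]_{u₋} and [v+u+sb]_{u₊} are nonzero, the reduced falling factorial [v+u]^_{u₊} is nonzero, and the ratio of their trailing coefficients satisfies tc([v+sb]_{u₋}) / tc([v+u+sb]_{u₊}) = ((∏_{i∈I\I₀} b_i)/(∏_{j∈I₀\I} b_j)) · ([v]^_{u₋} / [v+u]^_{u₊}). (Corollary 5.3, leading-coefficient statement.) -/
open scoped Classical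

open Polynomial in
lemma aux_lin_ne (a b : ℂ) (hb : b ≠ 0) : C a + C b * X ≠ 0 := fun h => by
  have := congrArg (fun p => Polynomial.coeff p 1) h
  simp at this; exact hb this

open Polynomial in
lemma aux_tcf (a b : ℂ) (hb : b ≠ 0) :
    (C a + C b * X).trailingCoeff = if a = 0 then b else a := by
  split_ifs with h
  · subst h; rw [C_0, zero_add, trailingCoeff_mul]; simp [trailingCoeff, natTrailingDegree_X]
  · rw [trailingCoeff, natTrailingDegree_eq_zero_of_constantCoeff_ne_zero (by simpa using h)]
    simpa using rfl

open Polynomial in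
lemma aux_tc_prod {ι : Type*} (s : Finset ι) (f : ι → Polynomial ℂ) :
    (∏ i ∈ s, f i).trailingCoeff = ∏ i ∈ s, (f i).trailingCoeff := by
  induction s using Finset.cons_induction with
  | empty => simp [trailingCoeff]
  | cons a s ha ih => rw [Finset.prod_cons, Finset.prod_cons, trailingCoeff_mul, ih]

lemma aux_card_filter (a : ℂ) (m : ℕ) :
    ((Finset.range m).filter (fun k : ℕ => a - (k : ℂ) = 0)).card
      = if ∃ k < m, a = (k : ℂ) then 1 else 0 := by
  split_ifs with h
  · obtain ⟨k, hk, hak⟩ := h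
    have : (Finset.range m).filter (fun k : ℕ => a - (k : ℂ) = 0) = {k} := by
      ext j
      simp only [Finset.mem_filter, Finset.mem_range, Finset.mem_singleton, sub_eq_zero]
      constructor
      · rintro ⟨_, hj⟩
        exact_mod_cast hak ▸ hj.symm
      · rintro rfl; exact ⟨hk, hak⟩
    simp [this]
  · rw [Finset.filter_eq_empty_iff.2, Finset.card_empty]
    intro j hj hc
    exact h ⟨j, Finset.mem_range.1 hj, sub_eq_zero.1 hc⟩

open Polynomial in
lemma aux_tc_pertFF {n : ℕ} (v b : Fin n → ℂ) (w : Fin n → ℕ) (hb : ∀ i, b i ≠ 0) :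
    (pertFF v b w).trailingCoeff
      = redffall v w * ∏ i ∈ Finset.univ.filter (fun i => ∃ k < w i, v i = (k : ℂ)), b i := by
  rw [pertFF, aux_tc_prod]
  have step : ∀ i, (∏ k ∈ Finset.range (w i),
      (C (v i - (k : ℂ)) + C (b i) * X)).trailingCoeff
      = (∏ k ∈ (Finset.range (w i)).filter (fun k : ℕ => v i - (k : ℂ) ≠ 0), (v i - (k : ℂ)))
        * (b i) ^ (if ∃ k < w i, v i = (k : ℂ) then 1 else 0) := by
    intro i
    rw [aux_tc_prod]
    have : ∀ k ∈ Finset.range (w i), (C (v i - (k : ℂ)) + C (b i) * X).trailingCoeff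
        = if v i - (k : ℂ) = 0 then b i else v i - (k : ℂ) := fun k _ => aux_tcf _ _ (hb i)
    rw [Finset.prod_congr rfl this, Finset.prod_ite, Finset.prod_const, aux_card_filter,
      mul_comm]
  rw [Finset.prod_congr rfl (fun i _ => step i), Finset.prod_mul_distrib, redffall]
  congr 1
  rw [Finset.prod_filter]
  exact Finset.prod_congr rfl (fun i _ => by split_ifs <;> simp)

lemma aux_setL {n : ℕ} (v : Fin n → ℂ) (u : Fin n → ℤ) :
    Finset.univ.filter (fun i => ∃ k < (-(u i)).toNat, v i = (k : ℂ))
      = nsupp (fun i => v i + ((u i : ℤ) : ℂ)) \ nsupp v := by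
  ext i
  simp only [nsupp, Finset.mem_filter, Finset.mem_sdiff, Finset.mem_univ, true_and,
    not_exists, not_and]
  constructor
  · rintro ⟨k, hk, hv⟩
    refine ⟨⟨(k : ℤ) + u i, by omega, by rw [hv]; push_cast; ring⟩, ?_⟩
    intro m hm hvm
    have : (k : ℂ) = (m : ℂ) := hv.symm.trans hvm
    have : (k : ℤ) = m := by exact_mod_cast this
    omega
  · rintro ⟨⟨m, hm, hvu⟩, hni⟩
    have hv : v i = ((m - u i : ℤ) : ℂ) := by push_cast; linear_combination hvu
    have hge : 0 ≤ m - u i := by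
      by_contra hlt
      exact hni (m - u i) (by omega) hv
    refine ⟨(m - u i).toNat, by omega, ?_⟩
    rw [hv]
    exact_mod_cast (congrArg (fun z : ℤ => (z : ℂ)) (Int.toNat_of_nonneg hge)).symm

lemma aux_setR {n : ℕ} (v : Fin n → ℂ) (u : Fin n → ℤ) :
    Finset.univ.filter (fun i => ∃ k < (u i).toNat, v i + ((u i : ℤ) : ℂ) = (k : ℂ))
      = nsupp v \ nsupp (fun i => v i + ((u i : ℤ) : ℂ)) := by
  ext i
  simp only [nsupp, Finset.mem_filter, Finset.mem_sdiff, Finset.mem_univ, true_and,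
    not_exists, not_and]
  constructor
  · rintro ⟨k, hk, hvu⟩
    refine ⟨⟨(k : ℤ) - u i, by omega, by push_cast; linear_combination hvu⟩, ?_⟩
    intro m hm hvm
    have : (k : ℂ) = (m : ℂ) := hvu.symm.trans hvm
    have : (k : ℤ) = m := by exact_mod_cast this
    omega
  · rintro ⟨⟨m, hm, hv⟩, hni⟩
    have hvu : v i + ((u i : ℤ) : ℂ) = ((m + u i : ℤ) : ℂ) := by
      rw [hv]; push_cast; ring
    have hge : 0 ≤ m + u i := by
      by_contra hlt
      exact hni (m + u i) (by omega) hvu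
    refine ⟨(m + u i).toNat, by omega, ?_⟩
    rw [hvu]
    exact_mod_cast (congrArg (fun z : ℤ => (z : ℂ)) (Int.toNat_of_nonneg hge)).symm

/-- Corollary 5.3, leading-coefficient statement: with `I₀ = nsupp(v)` and
`I = nsupp(v+u)`, both polynomials `[v+sb]_{u₋}` and `[v+u+sb]_{u₊}` are nonzero,
`[v+u]^_{u₊} ≠ 0`, and the ratio of trailing coefficients equals
`((∏_{i∈I\I₀} b_i)/(∏_{j∈I₀\I} b_j)) · ([v]^_{u₋}/[v+u]^_{u₊})`. -/
theorem trailingCoeff_ratio {n : ℕ} (hn : 0 < n) (v b : Fin n → ℂ) (u : Fin n → ℤ)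
    (hb : ∀ j, b j ≠ 0)
    (I₀ I : Finset (Fin n)) (hI₀ : I₀ = nsupp v)
    (hI : I = nsupp (fun i => v i + ((u i : ℤ) : ℂ))) :
    pertFF v b (fun i => (-(u i)).toNat) ≠ 0 ∧
    pertFF (fun i => v i + ((u i : ℤ) : ℂ)) b (fun i => (u i).toNat) ≠ 0 ∧
    redffall (fun i => v i + ((u i : ℤ) : ℂ)) (fun i => (u i).toNat) ≠ 0 ∧
    (pertFF v b (fun i => (-(u i)).toNat)).trailingCoeff /
        (pertFF (fun i => v i + ((u i : ℤ) : ℂ)) b (fun i => (u i).toNat)).trailingCoeff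
      = ((∏ i ∈ I \ I₀, b i) / (∏ j ∈ I₀ \ I, b j)) *
          (redffall v (fun i => (-(u i)).toNat) /
            redffall (fun i => v i + ((u i : ℤ) : ℂ)) (fun i => (u i).toNat)) := by
  subst hI₀ hI
  refine ⟨?_, ?_, ?_, ?_⟩
  · exact Finset.prod_ne_zero_iff.2 fun i _ =>
      Finset.prod_ne_zero_iff.2 fun k _ => aux_lin_ne _ _ (hb i)
  · exact Finset.prod_ne_zero_iff.2 fun i _ =>
      Finset.prod_ne_zero_iff.2 fun k _ => aux_lin_ne _ _ (hb i)
  · exact Finset.prod_ne_zero_iff.2 fun i _ =>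
      Finset.prod_ne_zero_iff.2 fun k hk => (Finset.mem_filter.1 hk).2
  · rw [aux_tc_pertFF _ _ _ hb, aux_tc_pertFF _ _ _ hb, aux_setL, aux_setR]
    ring
end

section
/- Let v ∈ ℂ^n and u, u' ∈ ℤ^n with nsupp(v+u) = nsupp(v+u'). Then [v+u]_{(u'−u)₋} ≠ 0; that is, ∏_{j : u'_j < u_j} (v_j+u_j)(v_j+u_j−1)⋯(v_j+u'_j+1) ≠ 0. (This nonvanishing is the computational core of Proposition 4.1: it allows one to pass, by applying ∂^{(u'−u)₋}, from the term of exponent v+u to the term of exponent v+u' without killing the highest logarithmic term.) -/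
open scoped Classical

/-- computational core of Proposition 4.1: if
`nsupp(v+u) = nsupp(v+u')`, then `[v+u]_{(u'−u)₋} ≠ 0`. -/
theorem ffall_shift_ne_zero_of_nsupp_eq {n : ℕ} (hn : 0 < n)
    (v : Fin n → ℂ) (u u' : Fin n → ℤ)
    (h : nsupp (fun i => v i + ((u i : ℤ) : ℂ)) = nsupp (fun i => v i + ((u' i : ℤ) : ℂ))) :
    ffall (fun i => v i + ((u i : ℤ) : ℂ)) (fun i => (-(u' i - u i)).toNat) ≠ 0 := by
  unfold ffall
  rw [Finset.prod_ne_zero_iff]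
  intro i _
  rw [Finset.prod_ne_zero_iff]
  intro k hk hzero
  simp only [Finset.mem_range] at hk
  -- v i = k - u i, an integer
  have hvi : v i = ((k : ℤ) - u i : ℤ) := by
    push_cast
    linear_combination hzero
  have hk' : (k : ℤ) < u i - u' i := by
    have := (Int.lt_toNat.mp hk)
    omega
  -- i ∈ nsupp (v + u')
  have hi' : i ∈ nsupp (fun i => v i + ((u' i : ℤ) : ℂ)) := by
    simp only [nsupp, Finset.mem_filter, Finset.mem_univ, true_and]
    refine ⟨(k : ℤ) - u i + u' i, by omega, ?_⟩
    rw [hvi]; push_cast; ring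
  rw [← h] at hi'
  simp only [nsupp, Finset.mem_filter, Finset.mem_univ, true_and] at hi'
  obtain ⟨m, hm, hme⟩ := hi'
  rw [hvi] at hme
  have : ((k : ℤ) - u i + u i : ℤ) = (m : ℂ) := by push_cast at hme ⊢; linear_combination hme
  have : ((k : ℤ) - u i + u i) = m := by exact_mod_cast this
  omega
end

section
/- Let v ∈ ℂ^n, let b^{(1)}, …, b^{(l)} ∈ ℂ^n, and let u ∈ ℕ^n. Define Q ∈ ℂ[s₁,…,s_l] by Q = ∏_{i=1}^n ∏_{k=0}^{u_i−1} (v_i − k + ℓ_i), where ℓ_i = Σ_{j=1}^l b_i^{(j)} s_j, and set e = |nsupp(v−u) \ nsupp(v)|. Then every homogeneous component of Q of total degree < e is zero, and the homogeneous component of Q of total degree e equals [v]^_u · ∏_{i ∈ nsupp(v−u)\nsupp(v)} ℓ_i. (This is the multivariate analogue of Lemma 5.1 underlying Lemma 6.1.) -/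
open scoped Classical

/-- The linear form `ℓ_i = Σ_j b_i^{(j)} s_j` in `ℂ[s₁,…,s_l]`. -/
noncomputable def ell {n l : ℕ} (b : Fin l → Fin n → ℂ) (i : Fin n) :
    MvPolynomial (Fin l) ℂ :=
  ∑ j, MvPolynomial.C (b j i) * MvPolynomial.X j

/-- The multivariate perturbed falling factorial
`∏_i ∏_{k=0}^{u_i−1} (v_i − k + ℓ_i)` in `ℂ[s₁,…,s_l]`. -/
noncomputable def pertFFmv {n l : ℕ} (v : Fin n → ℂ) (b : Fin l → Fin n → ℂ)
    (u : Fin n → ℕ) : MvPolynomial (Fin l) ℂ :=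
  ∏ i, ∏ k ∈ Finset.range (u i), (MvPolynomial.C (v i - (k : ℂ)) + ell b i)

open MvPolynomial

/-- `p` has no homogeneous components below degree `a`, and its component of degree `a`
is `A`. -/
def Lowest {σ : Type*} (a : ℕ) (A p : MvPolynomial σ ℂ) : Prop :=
  (∀ m < a, homogeneousComponent m p = 0) ∧ homogeneousComponent a p = A

theorem Lowest.mul {σ : Type*} {a b : ℕ} {A B p q : MvPolynomial σ ℂ}
    (hp : Lowest a A p) (hq : Lowest b B q) : Lowest (a + b) (A * B) (p * q) := by
  have key : ∀ m ≤ a + b, homogeneousComponent m (p * q)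
      = if m = a + b then A * B else 0 := by
    intro m hm
    conv_lhs => rw [← sum_homogeneousComponent p, ← sum_homogeneousComponent q]
    rw [Finset.sum_mul_sum, map_sum]
    simp only [map_sum]
    rw [Finset.sum_eq_single a, Finset.sum_eq_single b]
    · have hh : (homogeneousComponent a p * homogeneousComponent b q) ∈
        homogeneousSubmodule σ ℂ (a + b) := by
        rw [mem_homogeneousSubmodule]
        exact (homogeneousComponent_isHomogeneous a p).mul
          (homogeneousComponent_isHomogeneous b q)
      rw [homogeneousComponent_of_mem hh, hp.2, hq.2]
    · intro j _ hj
      rcases lt_or_gt_of_ne hj with h | h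
      · rw [hq.1 j h, mul_zero, map_zero]
      · have hh : (homogeneousComponent a p * homogeneousComponent j q) ∈
          homogeneousSubmodule σ ℂ (a + j) := by
          rw [mem_homogeneousSubmodule]
          exact (homogeneousComponent_isHomogeneous a p).mul
            (homogeneousComponent_isHomogeneous j q)
        rw [homogeneousComponent_of_mem hh, if_neg (by omega)]
    · intro h
      rw [Finset.mem_range, not_lt] at h
      rw [homogeneousComponent_eq_zero b q (by omega), mul_zero, map_zero]
    · intro i _ hi
      rcases lt_or_gt_of_ne hi with h | h
      · simp [hp.1 i h]
      · refine Finset.sum_eq_zero fun j _ => ?_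
        have hh : (homogeneousComponent i p * homogeneousComponent j q) ∈
          homogeneousSubmodule σ ℂ (i + j) := by
          rw [mem_homogeneousSubmodule]
          exact (homogeneousComponent_isHomogeneous i p).mul
            (homogeneousComponent_isHomogeneous j q)
        by_cases hj : j < b
        · rw [hq.1 j hj, mul_zero, map_zero]
        · rw [homogeneousComponent_of_mem hh, if_neg (by omega)]
    · intro h
      rw [Finset.mem_range, not_lt] at h
      refine Finset.sum_eq_zero fun j _ => ?_
      rw [homogeneousComponent_eq_zero a p (by omega), zero_mul, map_zero]
  constructor
  · intro m hm
    rw [key m (le_of_lt hm), if_neg (by omega)]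
  · rw [key _ le_rfl, if_pos rfl]

theorem Lowest.prod {σ ι : Type*} (s : Finset ι) (a : ι → ℕ) (A p : ι → MvPolynomial σ ℂ)
    (h : ∀ i ∈ s, Lowest (a i) (A i) (p i)) :
    Lowest (∑ i ∈ s, a i) (∏ i ∈ s, A i) (∏ i ∈ s, p i) := by
  classical
  induction s using Finset.cons_induction with
  | empty =>
    simp only [Finset.sum_empty, Finset.prod_empty]
    constructor
    · intro m hm; omega
    · simpa using homogeneousComponent_of_mem
        (mem_homogeneousSubmodule 0 (1 : MvPolynomial σ ℂ) |>.mpr (isHomogeneous_one σ ℂ))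
  | cons i s hi ih =>
    rw [Finset.sum_cons, Finset.prod_cons, Finset.prod_cons]
    exact (h i (Finset.mem_cons_self i s)).mul
      (ih fun j hj => h j (Finset.mem_cons_of_mem hj))

theorem coeff_zero_ell {n l : ℕ} (b : Fin l → Fin n → ℂ) (i : Fin n) :
    coeff 0 (ell b i) = 0 := by
  simp [ell, coeff_sum, coeff_C_mul, coeff_X]

theorem ell_isHomogeneous {n l : ℕ} (b : Fin l → Fin n → ℂ) (i : Fin n) :
    (ell b i).IsHomogeneous 1 := by
  apply IsHomogeneous.sum
  intro j _
  simpa using (isHomogeneous_C (Fin l) (b j i)).mul (isHomogeneous_X ℂ j)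

theorem lowest_C_add_ell {n l : ℕ} (b : Fin l → Fin n → ℂ) (i : Fin n) (c : ℂ) :
    Lowest 0 (C c) (C c + ell b i) := by
  constructor
  · intro m hm; omega
  · rw [homogeneousComponent_zero]
    simp [coeff_zero_ell]

theorem lowest_ell {n l : ℕ} (b : Fin l → Fin n → ℂ) (i : Fin n) :
    Lowest 1 (ell b i) (ell b i) := by
  constructor
  · intro m hm
    interval_cases m
    rw [homogeneousComponent_zero, coeff_zero_ell, map_zero]
  · rw [homogeneousComponent_of_mem
      ((mem_homogeneousSubmodule 1 _).mpr (ell_isHomogeneous b i)), if_pos rfl]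

/-- multivariate analogue of Lemma 5.1, underlying Lemma 6.1: with
`e = |nsupp(v−u) \ nsupp(v)|`, every homogeneous component of `Q` of total degree `< e`
vanishes, and the component of degree `e` is `[v]^_u · ∏_{i ∈ nsupp(v−u)\nsupp(v)} ℓ_i`. -/
theorem pertFFmv_lowest_component {n l : ℕ} (hn : 0 < n) (hl : 0 < l)
    (v : Fin n → ℂ) (b : Fin l → Fin n → ℂ) (u : Fin n → ℕ)
    (e : ℕ) (he : e = ((nsupp (fun i => v i - (u i : ℂ))) \ nsupp v).card) :
    (∀ m < e, MvPolynomial.homogeneousComponent m (pertFFmv v b u) = 0) ∧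
    MvPolynomial.homogeneousComponent e (pertFFmv v b u) =
      MvPolynomial.C (redffall v u) *
        ∏ i ∈ (nsupp (fun i => v i - (u i : ℂ))) \ nsupp v, ell b i := by
  set D : Finset (Fin n) := (nsupp (fun i => v i - (u i : ℂ))) \ nsupp v with hD
  -- characterization of D
  have hDmem : ∀ i : Fin n, i ∈ D ↔ ∃ k ∈ Finset.range (u i), v i = (k : ℂ) := by
    intro i
    rw [hD, Finset.mem_sdiff]
    simp only [nsupp, Finset.mem_filter, Finset.mem_univ, true_and]
    constructor
    · rintro ⟨⟨m, hm, hvm⟩, hnot⟩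
      have hvi : v i = ((m + u i : ℤ) : ℂ) := by
        push_cast
        push_cast at hvm
        linear_combination hvm
      have hge : 0 ≤ m + (u i : ℤ) := by
        by_contra hlt
        exact hnot ⟨m + u i, by omega, hvi⟩
      refine ⟨(m + u i).toNat, Finset.mem_range.mpr (by omega), ?_⟩
      rw [hvi]
      norm_cast
      omega
    · rintro ⟨k, hk, hvk⟩
      rw [Finset.mem_range] at hk
      constructor
      · refine ⟨(k : ℤ) - u i, by omega, ?_⟩
        push_cast
        linear_combination hvk
      · rintro ⟨m, hm, hvm⟩
        rw [hvk] at hvm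
        have : ((k : ℤ) : ℂ) = (m : ℂ) := by push_cast; exact hvm
        have := Int.cast_injective (α := ℂ) this
        omega
  -- the constant for each i
  set c : Fin n → ℂ := fun i =>
    ∏ k ∈ (Finset.range (u i)).filter (fun k : ℕ => v i - (k : ℂ) ≠ 0), (v i - (k : ℂ))
    with hc
  set d : Fin n → ℕ := fun i => if i ∈ D then 1 else 0 with hd
  set A : Fin n → MvPolynomial (Fin l) ℂ :=
    fun i => C (c i) * (if i ∈ D then ell b i else 1) with hA
  have key : ∀ i : Fin n,
      Lowest (d i) (A i) (∏ k ∈ Finset.range (u i), (C (v i - (k : ℂ)) + ell b i)) := by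
    intro i
    have hfilters := Finset.prod_filter_mul_prod_filter_not (Finset.range (u i))
      (fun k : ℕ => v i - (k : ℂ) ≠ 0) (fun k : ℕ => C (v i - (k : ℂ)) + ell b i)
    have base : Lowest 0 (C (c i))
        (∏ k ∈ (Finset.range (u i)).filter (fun k : ℕ => v i - (k : ℂ) ≠ 0),
          (C (v i - (k : ℂ)) + ell b i)) := by
      have := Lowest.prod ((Finset.range (u i)).filter (fun k : ℕ => v i - (k : ℂ) ≠ 0))
        (fun _ => 0) (fun k => C (v i - (k : ℂ))) (fun k => C (v i - (k : ℂ)) + ell b i)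
        (fun k _ => lowest_C_add_ell b i _)
      simpa [hc, Finset.sum_const, map_prod] using this
    by_cases hiD : i ∈ D
    · -- exactly one vanishing factor
      obtain ⟨k0, hk0r, hk0⟩ := (hDmem i).mp hiD
      have hfilter_eq : (Finset.range (u i)).filter (fun k : ℕ => ¬ v i - (k : ℂ) ≠ 0)
          = {k0} := by
        ext k
        simp only [Finset.mem_filter, Finset.mem_singleton, not_not, sub_eq_zero]
        constructor
        · rintro ⟨hkr, hkv⟩
          have : ((k : ℂ)) = (k0 : ℂ) := by rw [← hkv, hk0]
          exact_mod_cast this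
        · rintro rfl
          exact ⟨hk0r, hk0⟩
      have hzero : (∏ k ∈ (Finset.range (u i)).filter (fun k : ℕ => ¬ v i - (k : ℂ) ≠ 0),
          (C (v i - (k : ℂ)) + ell b i)) = ell b i := by
        rw [hfilter_eq, Finset.prod_singleton, hk0]
        simp
      have step : Lowest 1 (ell b i)
          (∏ k ∈ (Finset.range (u i)).filter (fun k : ℕ => ¬ v i - (k : ℂ) ≠ 0),
            (C (v i - (k : ℂ)) + ell b i)) := by
        rw [hzero]; exact lowest_ell b i
      have := base.mul step
      rw [hfilters] at this
      simpa [hd, hA, hiD] using this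
    · -- no vanishing factor
      have hfilter_eq : (Finset.range (u i)).filter (fun k : ℕ => v i - (k : ℂ) ≠ 0)
          = Finset.range (u i) := by
        rw [Finset.filter_eq_self]
        intro k hk hcon
        rw [sub_eq_zero] at hcon
        exact hiD ((hDmem i).mpr ⟨k, hk, hcon⟩)
      have := base
      rw [hfilter_eq] at this
      simpa [hd, hA, hiD] using this
  have main := Lowest.prod Finset.univ d A
    (fun i => ∏ k ∈ Finset.range (u i), (C (v i - (k : ℂ)) + ell b i)) (fun i _ => key i)
  have hsum : ∑ i, d i = e := by
    rw [he, hd]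
    simp only
    rw [Finset.sum_ite_mem, Finset.univ_inter, Finset.sum_const, smul_eq_mul, mul_one]
  have hprod : ∏ i, A i = C (redffall v u) * ∏ i ∈ D, ell b i := by
    rw [hA]
    simp only
    rw [Finset.prod_mul_distrib, Finset.prod_ite_mem, Finset.univ_inter, ← map_prod]
    rfl
  rw [hsum, hprod] at main
  exact ⟨main.1, main.2⟩
end
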